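/- For every k ∈ ℤ, H_2(k) = H_2(k+1), where H_2(k) := Q_{1,k}⁴/(Q_{2,2k}²Q_{2,2k+1}²) + 2·Q_{1,k}³/(Q_{1,k+1}Q_{2,2k}²) + Q_{1,k}²Q_{2,2k+1}²/(Q_{1,k+1}²Q_{2,2k}²) + 2·Q_{1,k}²/Q_{2,2k+1}² + Q_{1,k}²Q_{1,k+1}²/(Q_{2,2k}²Q_{2,2k+1}²) + 2·Q_{1,k}/(Q_{1,k+1}Q_{2,2k}) + 2·Q_{1,k}Q_{1,k+1}/Q_{2,2k}² + Q_{2,2k+1}²/(Q_{1,k}²Q_{1,k+1}²) + 2·Q_{2,2k+1}²/(Q_{1,k+1}²Q_{2,2k}) + Q_{2,2k+1}²/Q_{2,2k}² + 2·Q_{2,2k}/Q_{1,k}² + 2·Q_{1,k+1}²/Q_{2,2k+1}² + Q_{2,2k}²/Q_{2,2k+1}² + Q_{1,k+1}²Q_{2,2k}²/(Q_{1,k}²Q_{2,2k+1}²) + 2. That is, H_2 is a conserved quantity of the B_2 Q-system. -/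

import Mathlib

/-- The Hamiltonian `H_2(k)` of the `B_2` Q-system: the partition function of
pairs of hard particles, written out explicitly. -/
noncomputable def HamB2two (Q1 Q2 : ℤ → ℂ) (k : ℤ) : ℂ :=
  Q1 k ^ 4 / (Q2 (2 * k) ^ 2 * Q2 (2 * k + 1) ^ 2)
    + 2 * Q1 k ^ 3 / (Q1 (k + 1) * Q2 (2 * k) ^ 2)
    + Q1 k ^ 2 * Q2 (2 * k + 1) ^ 2 / (Q1 (k + 1) ^ 2 * Q2 (2 * k) ^ 2)
    + 2 * Q1 k ^ 2 / Q2 (2 * k + 1) ^ 2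
    + Q1 k ^ 2 * Q1 (k + 1) ^ 2 / (Q2 (2 * k) ^ 2 * Q2 (2 * k + 1) ^ 2)
    + 2 * Q1 k / (Q1 (k + 1) * Q2 (2 * k))
    + 2 * (Q1 k * Q1 (k + 1)) / Q2 (2 * k) ^ 2
    + Q2 (2 * k + 1) ^ 2 / (Q1 k ^ 2 * Q1 (k + 1) ^ 2)
    + 2 * Q2 (2 * k + 1) ^ 2 / (Q1 (k + 1) ^ 2 * Q2 (2 * k))
    + Q2 (2 * k + 1) ^ 2 / Q2 (2 * k) ^ 2
    + 2 * Q2 (2 * k) / Q1 k ^ 2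
    + 2 * Q1 (k + 1) ^ 2 / Q2 (2 * k + 1) ^ 2
    + Q2 (2 * k) ^ 2 / Q2 (2 * k + 1) ^ 2
    + Q1 (k + 1) ^ 2 * Q2 (2 * k) ^ 2 / (Q1 k ^ 2 * Q2 (2 * k + 1) ^ 2)
    + 2

/-- Numerator of the Hamiltonian over the common denominator `w^2*x^2*y^2*z^2`. -/
noncomputable def NB2 (w x y z : ℂ) : ℂ :=
  y^2*z^4 + 2*x^2*y^3*z^2 + x^4*y^4 + 2*w^2*y*z^4 + w^2*x^2*z^4 + 2*w^2*x^2*y^2*z^2 + w^2*x^2*y^4 + 2*w^2*x^4*y^2 + 2*w^3*x*y*z^2 + 2*w^3*x^3*z^2 + w^4*z^4 + 2*w^4*x^2*y^2 + w^4*x^4 + 2*w^5*x*z^2 + w^6*x^2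

lemma ham_poly (w x y z : ℂ) (hw : w ≠ 0) (hx : x ≠ 0) (hy : y ≠ 0) (hz : z ≠ 0) :
    w ^ 4 / (y ^ 2 * z ^ 2)
    + 2 * w ^ 3 / (x * y ^ 2)
    + w ^ 2 * z ^ 2 / (x ^ 2 * y ^ 2)
    + 2 * w ^ 2 / z ^ 2
    + w ^ 2 * x ^ 2 / (y ^ 2 * z ^ 2)
    + 2 * w / (x * y)
    + 2 * (w * x) / y ^ 2
    + z ^ 2 / (w ^ 2 * x ^ 2)
    + 2 * z ^ 2 / (x ^ 2 * y)
    + z ^ 2 / y ^ 2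
    + 2 * y / w ^ 2
    + 2 * x ^ 2 / z ^ 2
    + y ^ 2 / z ^ 2
    + x ^ 2 * y ^ 2 / (w ^ 2 * z ^ 2)
    + 2 = NB2 w x y z / (w ^ 2 * x ^ 2 * y ^ 2 * z ^ 2) := by
  have hD : (w ^ 2 * x ^ 2 * y ^ 2 * z ^ 2) ≠ 0 :=
    mul_ne_zero (mul_ne_zero (mul_ne_zero (pow_ne_zero 2 hw) (pow_ne_zero 2 hx))
      (pow_ne_zero 2 hy)) (pow_ne_zero 2 hz)
  have ht1 : (w ^ 4) / (y ^ 2 * z ^ 2) = ((w ^ 4) * (w^2*x^2)) / (w ^ 2 * x ^ 2 * y ^ 2 * z ^ 2) := by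
    rw [div_eq_div_iff (mul_ne_zero (pow_ne_zero 2 hy) (pow_ne_zero 2 hz)) hD]; ring
  have ht2 : (2 * w ^ 3) / (x * y ^ 2) = ((2 * w ^ 3) * (w^2*x*z^2)) / (w ^ 2 * x ^ 2 * y ^ 2 * z ^ 2) := by
    rw [div_eq_div_iff (mul_ne_zero (hx) (pow_ne_zero 2 hy)) hD]; ring
  have ht3 : (w ^ 2 * z ^ 2) / (x ^ 2 * y ^ 2) = ((w ^ 2 * z ^ 2) * (w^2*z^2)) / (w ^ 2 * x ^ 2 * y ^ 2 * z ^ 2) := by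
    rw [div_eq_div_iff (mul_ne_zero (pow_ne_zero 2 hx) (pow_ne_zero 2 hy)) hD]; ring
  have ht4 : (2 * w ^ 2) / (z ^ 2) = ((2 * w ^ 2) * (w^2*x^2*y^2)) / (w ^ 2 * x ^ 2 * y ^ 2 * z ^ 2) := by
    rw [div_eq_div_iff ((pow_ne_zero 2 hz)) hD]; ring
  have ht5 : (w ^ 2 * x ^ 2) / (y ^ 2 * z ^ 2) = ((w ^ 2 * x ^ 2) * (w^2*x^2)) / (w ^ 2 * x ^ 2 * y ^ 2 * z ^ 2) := by
    rw [div_eq_div_iff (mul_ne_zero (pow_ne_zero 2 hy) (pow_ne_zero 2 hz)) hD]; ring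
  have ht6 : (2 * w) / (x * y) = ((2 * w) * (w^2*x*y*z^2)) / (w ^ 2 * x ^ 2 * y ^ 2 * z ^ 2) := by
    rw [div_eq_div_iff (mul_ne_zero (hx) (hy)) hD]; ring
  have ht7 : (2 * (w * x)) / (y ^ 2) = ((2 * (w * x)) * (w^2*x^2*z^2)) / (w ^ 2 * x ^ 2 * y ^ 2 * z ^ 2) := by
    rw [div_eq_div_iff ((pow_ne_zero 2 hy)) hD]; ring
  have ht8 : (z ^ 2) / (w ^ 2 * x ^ 2) = ((z ^ 2) * (y^2*z^2)) / (w ^ 2 * x ^ 2 * y ^ 2 * z ^ 2) := by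
    rw [div_eq_div_iff (mul_ne_zero (pow_ne_zero 2 hw) (pow_ne_zero 2 hx)) hD]; ring
  have ht9 : (2 * z ^ 2) / (x ^ 2 * y) = ((2 * z ^ 2) * (w^2*y*z^2)) / (w ^ 2 * x ^ 2 * y ^ 2 * z ^ 2) := by
    rw [div_eq_div_iff (mul_ne_zero (pow_ne_zero 2 hx) (hy)) hD]; ring
  have ht10 : (z ^ 2) / (y ^ 2) = ((z ^ 2) * (w^2*x^2*z^2)) / (w ^ 2 * x ^ 2 * y ^ 2 * z ^ 2) := by
    rw [div_eq_div_iff ((pow_ne_zero 2 hy)) hD]; ring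
  have ht11 : (2 * y) / (w ^ 2) = ((2 * y) * (x^2*y^2*z^2)) / (w ^ 2 * x ^ 2 * y ^ 2 * z ^ 2) := by
    rw [div_eq_div_iff ((pow_ne_zero 2 hw)) hD]; ring
  have ht12 : (2 * x ^ 2) / (z ^ 2) = ((2 * x ^ 2) * (w^2*x^2*y^2)) / (w ^ 2 * x ^ 2 * y ^ 2 * z ^ 2) := by
    rw [div_eq_div_iff ((pow_ne_zero 2 hz)) hD]; ring
  have ht13 : (y ^ 2) / (z ^ 2) = ((y ^ 2) * (w^2*x^2*y^2)) / (w ^ 2 * x ^ 2 * y ^ 2 * z ^ 2) := by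
    rw [div_eq_div_iff ((pow_ne_zero 2 hz)) hD]; ring
  have ht14 : (x ^ 2 * y ^ 2) / (w ^ 2 * z ^ 2) = ((x ^ 2 * y ^ 2) * (x^2*y^2)) / (w ^ 2 * x ^ 2 * y ^ 2 * z ^ 2) := by
    rw [div_eq_div_iff (mul_ne_zero (pow_ne_zero 2 hw) (pow_ne_zero 2 hz)) hD]; ring
  rw [ht1, ht2, ht3, ht4, ht5, ht6, ht7, ht8, ht9, ht10, ht11, ht12, ht13, ht14]
  rw [← add_div, ← add_div, ← add_div, ← add_div,
    ← add_div, ← add_div, ← add_div, ← add_div,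
    ← add_div, ← add_div, ← add_div, ← add_div,
    ← add_div, div_add' _ _ _ hD, div_eq_div_iff hD hD]
  unfold NB2
  ring

lemma ham_formula (Q1 Q2 : ℤ → ℂ) (k : ℤ)
    (h1 : Q1 k ≠ 0) (h2 : Q1 (k + 1) ≠ 0)
    (h3 : Q2 (2 * k) ≠ 0) (h4 : Q2 (2 * k + 1) ≠ 0) :
    HamB2two Q1 Q2 k =
      NB2 (Q1 k) (Q1 (k + 1)) (Q2 (2 * k)) (Q2 (2 * k + 1)) /
        (Q1 k ^ 2 * Q1 (k + 1) ^ 2 * Q2 (2 * k) ^ 2 * Q2 (2 * k + 1) ^ 2) := by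
  exact ham_poly _ _ _ _ h1 h2 h3 h4

set_option maxHeartbeats 1600000 in
/-- `H_2` is a conserved quantity of the `B_2` Q-system. -/
theorem HamB2two_conserved
    (Q1 Q2 : ℤ → ℂ)
    (h1ne : ∀ k : ℤ, Q1 k ≠ 0) (h2ne : ∀ k : ℤ, Q2 k ≠ 0)
    (hrec1 : ∀ k : ℤ, Q1 (k + 1) * Q1 (k - 1) = Q1 k ^ 2 + Q2 (2 * k))
    (hrec2 : ∀ k : ℤ, Q2 (k + 1) * Q2 (k - 1) =
      Q2 k ^ 2 + Q1 (Int.fdiv k 2) * Q1 (Int.fdiv (k + 1) 2)) :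
    ∀ k : ℤ, HamB2two Q1 Q2 k = HamB2two Q1 Q2 (k + 1) := by
  intro k
  have r1 : Q1 (k + 2) * Q1 k = Q1 (k + 1) ^ 2 + Q2 (2 * k + 2) := by
    have h := hrec1 (k + 1)
    have a1 : k + 1 + 1 = k + 2 := by ring
    have a2 : k + 1 - 1 = k := by ring
    have a3 : 2 * (k + 1) = 2 * k + 2 := by ring
    rw [a1, a2, a3] at h
    exact h
  have r2 : Q2 (2 * k + 2) * Q2 (2 * k) = Q2 (2 * k + 1) ^ 2 + Q1 k * Q1 (k + 1) := by
    have h := hrec2 (2 * k + 1)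
    have a1 : 2 * k + 1 + 1 = 2 * k + 2 := by ring
    have a2 : 2 * k + 1 - 1 = 2 * k := by ring
    have a3 : Int.fdiv (2 * k + 1) 2 = k := by
      rw [Int.fdiv_eq_ediv_of_nonneg _ (by norm_num)]; omega
    have a4 : Int.fdiv (2 * k + 2) 2 = k + 1 := by
      rw [Int.fdiv_eq_ediv_of_nonneg _ (by norm_num)]; omega
    rw [a1, a2] at h
    rw [a3] at h
    rw [a4] at h
    exact h
  have r3 : Q2 (2 * k + 3) * Q2 (2 * k + 1) = Q2 (2 * k + 2) ^ 2 + Q1 (k + 1) ^ 2 := by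
    have h := hrec2 (2 * k + 2)
    have a1 : 2 * k + 2 + 1 = 2 * k + 3 := by ring
    have a2 : 2 * k + 2 - 1 = 2 * k + 1 := by ring
    have a3 : Int.fdiv (2 * k + 2) 2 = k + 1 := by
      rw [Int.fdiv_eq_ediv_of_nonneg _ (by norm_num)]; omega
    have a4 : Int.fdiv (2 * k + 3) 2 = k + 1 := by
      rw [Int.fdiv_eq_ediv_of_nonneg _ (by norm_num)]; omega
    rw [a1, a2] at h
    rw [a3] at h
    rw [a4] at h
    rw [← sq] at h
    exact h
  rw [ham_formula Q1 Q2 k (h1ne k) (h1ne (k + 1)) (h2ne (2 * k)) (h2ne (2 * k + 1)),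
    ham_formula Q1 Q2 (k + 1) (h1ne (k + 1)) (h1ne (k + 1 + 1)) (h2ne (2 * (k + 1)))
      (h2ne (2 * (k + 1) + 1))]
  have i2 : 2 * (k + 1) + 1 = 2 * k + 3 := by ring
  have i1 : 2 * (k + 1) = 2 * k + 2 := by ring
  have i3 : k + 1 + 1 = k + 2 := by ring
  rw [i2, i1, i3]
  set a := Q1 k
  set b := Q1 (k + 1)
  set c := Q2 (2 * k)
  set d := Q2 (2 * k + 1)
  set e := Q2 (2 * k + 2)
  set f := Q1 (k + 2)
  set g := Q2 (2 * k + 3)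
  have n1 : a ≠ 0 := h1ne k
  have n2 : b ≠ 0 := h1ne (k + 1)
  have n3 : c ≠ 0 := h2ne (2 * k)
  have n4 : d ≠ 0 := h2ne (2 * k + 1)
  have n5 : e ≠ 0 := h2ne (2 * k + 2)
  have n6 : f ≠ 0 := h1ne (k + 2)
  have n7 : g ≠ 0 := h2ne (2 * k + 3)
  rw [div_eq_div_iff
    (by exact mul_ne_zero (mul_ne_zero (mul_ne_zero (pow_ne_zero 2 n1) (pow_ne_zero 2 n2))
      (pow_ne_zero 2 n3)) (pow_ne_zero 2 n4))
    (by exact mul_ne_zero (mul_ne_zero (mul_ne_zero (pow_ne_zero 2 n2) (pow_ne_zero 2 n6))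
      (pow_ne_zero 2 n5)) (pow_ne_zero 2 n7))]
  unfold NB2
  linear_combination (2*b^2*c*d^4*e^3*g^2 + (-2)*b^2*c^2*d^2*e^4*g^2 + (-1)*b^2*c^2*d^2*e^5*f^2 + (-1)*b^3*d^4*e^4*f + b^3*d^6*f*g^2 + (-1)*b^3*c*d^2*e^5*f + b^3*c*d^4*e*f*g^2 + (-1)*b^4*d^2*e^5 + b^4*d^4*e*g^2 + b^4*d^4*e^3*g^2 + 2*b^4*c*d^4*e^2*g^2 + (-1)*b^4*c^2*d^2*e*g^4 + (-2)*b^4*c^2*d^2*e^3*g^2 + (-2)*b^4*c^2*d^2*e^3*f^2 + (-1)*b^4*c^2*d^2*e^4*f^2 + (-1)*b^4*c^2*d^2*e^5 + b^4*c^4*e^3*g^2 + (-2)*b^5*d^4*e^2*f + (-2)*b^5*d^4*e^3*f + 2*b^5*d^5*e*f*g + (-2)*b^5*c*d^2*e^3*f + (-2)*b^5*c*d^2*e^4*f + 2*b^5*c*d^4*f*g^2 + (-2)*b^6*d^2*e^3 + (-3)*b^6*d^2*e^4 + 3*b^6*d^4*g^2 + b^6*d^4*e^2*g^2 + 2*b^6*c^2*e^3*g^2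 + (-1)*b^6*c^2*d^2*g^4 + (-1)*b^6*c^2*d^2*e*f^2 + (-2)*b^6*c^2*d^2*e^2*f^2 + (-2)*b^6*c^2*d^2*e^3 + (-1)*b^6*c^2*d^2*e^4 + b^6*c^4*e^2*g^2 + (-1)*b^7*d^4*f + (-2)*b^7*d^4*e*f + (-1)*b^7*d^4*e^2*f + b^7*d^5*f*g + (-1)*b^7*c*d^2*e*f + (-4)*b^7*c*d^2*e^2*f + (-1)*b^7*c*d^2*e^3*f + b^7*c*d^3*e*f*g + (-1)*b^7*c^2*d^2*f*g^2 + b^7*c^3*e*f*g^2 + (-1)*b^8*d^2*e + (-6)*b^8*d^2*e^2 + (-3)*b^8*d^2*e^3 + 3*b^8*d^3*e*g + b^8*c^2*e*g^2 + 2*b^8*c^2*e^2*g^2 + (-1)*b^8*c^2*d^2*f^2 + (-1)*b^8*c^2*d^2*e + (-2)*b^8*c^2*d^2*e^2 + (-1)*b^9*d^4*f + (-2)*b^9*c*d^2*f + (-1)*b^9*c*d^2*e*f + (-3)*b^10*d^2 + (-3)*b^10*d^2*e + (-1)*b^10*d^2*e^2 + b^10*d^3*g + b^10*c^2*g^2 +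 (-1)*b^10*c^2*d^2 + (-1)*b^12*d^2 + 2*a*b^2*c*d^4*e^2*f*g^2 + (-2)*a*b^2*c^2*d^2*e^3*f*g^2 + (-1)*a*b^2*c^2*d^2*e^4*f^3 + 2*a*b^3*c*d^2*e^3*g^2 + a*b^4*d^4*e^2*f*g^2 + (-1)*a*b^4*c^2*d^2*f*g^4 + (-2)*a*b^4*c^2*d^2*e^2*f^3 + (-1)*a*b^4*c^2*d^2*e^4*f + a*b^4*c^4*e^2*f*g^2 + 2*a*b^5*d^2*e^3*g^2 + 2*a*b^5*c*d^2*e^2*g^2 + (-2)*a*b^5*c^2*d^2*f^2*g^2 + (-2)*a*b^5*c^2*d^2*e*g^2 + 2*a*b^6*c^2*e^2*f*g^2 + (-1)*a*b^6*c^2*d^2*f^3 + (-2)*a*b^6*c^2*d^2*e^2*f + 2*a*b^7*d^2*e^2*g^2 + (-2)*a*b^7*c^2*d^2*g^2 + (-1)*a*b^8*c^2*d^2*f + a^2*b^2*d^4*e^3*g^2 + 2*a^2*b^3*c*d^2*e^2*f*g^2 + a^2*b^4*d^4*e^2*g^2 + 2*a^2*b^4*c^2*e^3*g^2 + 2*a^2*b^5*d^2*e^2*f*g^2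 + a^2*b^6*e^3*g^2 + 2*a^2*b^6*c^2*e^2*g^2 + a^2*b^8*e^2*g^2 + a^3*b^2*d^4*e^2*f*g^2 + 2*a^3*b^3*d^2*e^3*g^2 + 2*a^3*b^4*c^2*e^2*f*g^2 + 2*a^3*b^5*d^2*e^2*g^2 + a^3*b^6*e^2*f*g^2 + 2*a^4*b^3*d^2*e^2*f*g^2 + a^4*b^4*e^3*g^2 + a^4*b^6*e^2*g^2 + a^5*b^4*e^2*f*g^2) * r1 + ((-1)*b^2*d^4*e^4*f^2 + b^2*d^6*f^2*g^2 + (-2)*b^2*c*d^2*e^4*g^2 + (-1)*b^2*c*d^2*e^5*f^2 + b^2*c*d^4*e*f^2*g^2 + (-1)*b^3*d^2*e^5*f + b^3*d^4*e*f*g^2 + (-1)*b^4*d^4*g^4 + (-2)*b^4*d^4*e^2*f^2 + (-2)*b^4*d^4*e^3*f^2 + (-1)*b^4*d^4*e^4 + 2*b^4*d^5*e*f^2*g + b^4*d^6*g^2 + (-1)*b^4*c*d^2*e*g^4 + (-4)*b^4*c*d^2*e^3*g^2 + (-2)*b^4*c*d^2*e^3*f^2 + (-2)*b^4*c*d^2*e^4*f^2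 + (-1)*b^4*c*d^2*e^5 + 2*b^4*c*d^4*f^2*g^2 + b^4*c*d^4*e*g^2 + 2*b^4*c^2*d^2*e*f^2*g^2 + b^4*c^2*d^2*e^2*g^2 + b^4*c^3*e^3*g^2 + (-2)*b^5*d^2*e^3*f + (-3)*b^5*d^2*e^4*f + 3*b^5*d^4*f*g^2 + 2*b^6*d^2*e^2*g^2 + (-2)*b^6*d^3*e*g^3 + (-1)*b^6*d^4*f^2 + (-2)*b^6*d^4*e*f^2 + (-2)*b^6*d^4*e^2 + (-1)*b^6*d^4*e^2*f^2 + (-2)*b^6*d^4*e^3 + b^6*d^5*f^2*g + 2*b^6*d^5*e*g + 2*b^6*c*e^3*g^2 + (-2)*b^6*c*d^2*g^4 + (-1)*b^6*c*d^2*e*f^2 + (-2)*b^6*c*d^2*e^2*g^2 + (-4)*b^6*c*d^2*e^2*f^2 + (-2)*b^6*c*d^2*e^3 + (-1)*b^6*c*d^2*e^3*f^2 + (-2)*b^6*c*d^2*e^4 + b^6*c*d^3*e*f^2*g + 2*b^6*c*d^4*g^2 + b^6*c^2*d^2*f^2*g^2 + 2*b^6*c^2*d^2*e*g^2 + b^6*c^3*e*f^2*g^2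 + 2*b^6*c^3*e^2*g^2 + (-1)*b^7*d^2*e*f + (-6)*b^7*d^2*e^2*f + (-3)*b^7*d^2*e^3*f + 3*b^7*d^3*e*f*g + b^7*c^2*e*f*g^2 + b^8*d^2*g^2 + 2*b^8*d^2*e*g^2 + (-1)*b^8*d^3*g^3 + (-1)*b^8*d^4 + (-1)*b^8*d^4*f^2 + (-2)*b^8*d^4*e + (-1)*b^8*d^4*e^2 + b^8*d^5*g + b^8*c*e*g^2 + 4*b^8*c*e^2*g^2 + (-1)*b^8*c*d*e*g^3 + (-2)*b^8*c*d^2*f^2 + (-1)*b^8*c*d^2*e + (-1)*b^8*c*d^2*e*f^2 + (-4)*b^8*c*d^2*e^2 + (-1)*b^8*c*d^2*e^3 + b^8*c*d^3*e*g + b^8*c^2*d^2*g^2 + b^8*c^3*e*g^2 + (-3)*b^9*d^2*f + (-3)*b^9*d^2*e*f + (-1)*b^9*d^2*e^2*f + b^9*d^3*f*g + b^9*c^2*f*g^2 + b^10*d^2*g^2 + (-1)*b^10*d^4 + 2*b^10*c*g^2 + b^10*c*e*g^2 + (-2)*b^10*c*d^2 + (-1)*b^10*c*d^2*e + (-1)*b^11*d^2*f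 + (-1)*a*b^5*d^2*g^4 + (-1)*a*b^5*d^2*e^4 + a*b^5*d^4*g^2 + a*b^5*c^2*e^2*g^2 + 2*a*b^7*e^2*g^2 + (-2)*a*b^7*d*e*g^3 + (-2)*a*b^7*d^2*e^2 + (-2)*a*b^7*d^2*e^3 + 2*a*b^7*d^3*e*g + 2*a*b^7*c^2*e*g^2 + a*b^9*g^2 + 2*a*b^9*e*g^2 + (-1)*a*b^9*d*g^3 + (-1)*a*b^9*d^2 + (-2)*a*b^9*d^2*e + (-1)*a*b^9*d^2*e^2 + a*b^9*d^3*g + a*b^9*c^2*g^2 + a*b^11*g^2 + (-1)*a*b^11*d^2 + (-1)*a^2*b^2*d^4*g^4 + (-1)*a^2*b^2*c*d^2*e*g^4 + 2*a^2*b^4*d^2*e^2*g^2 + (-2)*a^2*b^4*d^3*e*g^3 + 2*a^2*b^4*c*e^3*g^2 + (-2)*a^2*b^4*c*d^2*g^4 + a^2*b^6*d^2*g^2 + 2*a^2*b^6*d^2*e*g^2 + (-1)*a^2*b^6*d^3*g^3 + a^2*b^6*c*e*g^2 + 4*a^2*b^6*c*e^2*g^2 + (-1)*a^2*b^6*c*d*e*g^3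 + a^2*b^8*d^2*g^2 + 2*a^2*b^8*c*g^2 + a^2*b^8*c*e*g^2 + (-1)*a^3*b^3*d^2*g^4 + 2*a^3*b^5*e^2*g^2 + (-2)*a^3*b^5*d*e*g^3 + a^3*b^7*g^2 + 2*a^3*b^7*e*g^2 + (-1)*a^3*b^7*d*g^3 + a^3*b^9*g^2) * r2 + (b^2*d^6*e^2*f^2 + b^2*d^7*f^2*g + 2*b^3*d^4*e^3*f + 2*b^3*d^5*e*f*g + b^4*d^2*e^4 + b^4*d^3*e^2*g + (-1)*b^4*d^4*e^2*g^2 + (-1)*b^4*d^5*g^3 + b^4*d^6*f^2 + 2*b^4*d^6*e*f^2 + b^4*d^6*e^2 + b^4*d^7*g + 2*b^4*c*d^5*f^2*g + 2*b^5*d^4*e*f + 6*b^5*d^4*e^2*f + 4*b^5*d^5*f*g + b^6*d^2*e^2 + 4*b^6*d^2*e^3 + 4*b^6*d^3*e*g + (-1)*b^6*d^4*g^2 + (-2)*b^6*d^4*e*g^2 + b^6*d^6 + b^6*d^6*f^2 + 2*b^6*d^6*e + (-2)*b^6*c*d^3*g^3 + 2*b^6*c*d^4*f^2 + 2*b^6*c*d^5*g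 + b^6*c^2*d^3*f^2*g + 4*b^7*d^4*f + 6*b^7*d^4*e*f + 2*b^7*c*d^3*f*g + 4*b^8*d^2*e + 6*b^8*d^2*e^2 + 3*b^8*d^3*g + (-1)*b^8*d^4*g^2 + b^8*d^6 + (-2)*b^8*c*d^2*g^2 + 2*b^8*c*d^4 + (-1)*b^8*c^2*d*g^3 + b^8*c^2*d^2*f^2 + b^8*c^2*d^3*g + 2*b^9*d^4*f + 2*b^9*c*d^2*f + 3*b^10*d^2 + 4*b^10*d^2*e + (-1)*b^10*c^2*g^2 + b^10*c^2*d^2 + b^12*d^2 + (-2)*a*b^5*d^2*e^2*g^2 + (-2)*a*b^5*d^3*g^3 + 2*a*b^5*d^4*e^2 + 2*a*b^5*d^5*g + (-2)*a*b^7*d^2*g^2 + (-4)*a*b^7*d^2*e*g^2 + 2*a*b^7*d^4 + 4*a*b^7*d^4*e + (-2)*a*b^7*c*d*g^3 + 2*a*b^7*c*d^3*g + (-2)*a*b^9*d^2*g^2 + 2*a*b^9*d^4 + (-2)*a*b^9*c*g^2 + 2*a*b^9*c*d^2 + (-1)*a^2*b^2*d^4*e^2*g^2 + (-1)*a^2*b^2*d^5*g^3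 + (-1)*a^2*b^4*d^4*g^2 + (-2)*a^2*b^4*d^4*e*g^2 + (-2)*a^2*b^4*c*d^3*g^3 + (-1)*a^2*b^6*e^2*g^2 + (-1)*a^2*b^6*d*g^3 + a^2*b^6*d^2*e^2 + a^2*b^6*d^3*g + (-1)*a^2*b^6*d^4*g^2 + (-2)*a^2*b^6*c*d^2*g^2 + (-1)*a^2*b^6*c^2*d*g^3 + (-1)*a^2*b^8*g^2 + (-2)*a^2*b^8*e*g^2 + a^2*b^8*d^2 + 2*a^2*b^8*d^2*e + (-1)*a^2*b^8*c^2*g^2 + (-1)*a^2*b^10*g^2 + a^2*b^10*d^2 + (-2)*a^3*b^3*d^2*e^2*g^2 + (-2)*a^3*b^3*d^3*g^3 + (-2)*a^3*b^5*d^2*g^2 + (-4)*a^3*b^5*d^2*e*g^2 + (-2)*a^3*b^5*c*d*g^3 + (-2)*a^3*b^7*d^2*g^2 + (-2)*a^3*b^7*c*g^2 + (-1)*a^4*b^4*e^2*g^2 + (-1)*a^4*b^4*d*g^3 + (-1)*a^4*b^6*g^2 + (-2)*a^4*b^6*e*g^2 + (-1)*a^4*b^8*g^2) * r3
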